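/- Let I ≥ 2 be an integer, β ∈ (0,1), and ℓ_1, …, ℓ_I : ℝ^n → ℝ ∪ {+∞} arbitrary functions. For integers 1 ≤ k ≤ j ≤ I define L_k^j := Σ_{i=k}^{j} β_i^j ℓ_i, where β_k^j := β^{j−k} and β_i^j := (1−β)β^{j−i} for k < i ≤ j. Let B be a set of integers with {1} ⊆ B ⊆ {1, …, I}, let B_j := {k ∈ B : k ≤ j}, and let Γ_j := max_{k ∈ B_j} L_k^j (pointwise maximum). Then Γ_1 = ℓ_1 and, for every 2 ≤ j ≤ I and every u ∈ ℝ^n: if j ∈ B then Γ_j(u) = (1−β) ℓ_j(u) + β·max{ Γ_{j−1}(u), ℓ_j(u) }, and if j ∉ B then Γ_j(u) = (1−β) ℓ_j(u) + β Γ_{j−1}(u). Consequently Γ_j(u) ≥ β Γ_{j−1}(u) + (1−β) ℓ_j(u) for all u and all 2 ≤ j ≤ I. -/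

import Mathlib

private lemma myMulNeBot {r : ℝ} (hr : 0 < r) {a : EReal} (ha : a ≠ ⊥) :
    (r : EReal) * a ≠ ⊥ := by
  induction a with
  | bot => exact absurd rfl ha
  | coe x => rw [← EReal.coe_mul]; exact EReal.coe_ne_bot _
  | top => simp [EReal.coe_mul_top_of_pos hr]

private lemma myAddNeBot {a b : EReal} (ha : a ≠ ⊥) (hb : b ≠ ⊥) : a + b ≠ ⊥ := by
  simp [EReal.add_eq_bot_iff, ha, hb]

private lemma myMulAdd (r : ℝ) (hr : 0 < r) (a b : EReal) (ha : a ≠ ⊥) (hb : b ≠ ⊥) :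
    (r : EReal) * (a + b) = (r : EReal) * a + (r : EReal) * b := by
  induction a with
  | bot => exact absurd rfl ha
  | coe x =>
    induction b with
    | bot => exact absurd rfl hb
    | coe y => norm_cast; ring
    | top =>
      rw [EReal.add_top_of_ne_bot (EReal.coe_ne_bot x), EReal.coe_mul_top_of_pos hr,
        EReal.add_top_of_ne_bot (myMulNeBot hr (EReal.coe_ne_bot x))]
  | top =>
    rw [EReal.top_add_of_ne_bot hb, EReal.coe_mul_top_of_pos hr,
      EReal.top_add_of_ne_bot (myMulNeBot hr hb)]

private lemma mySumNeBot {ι : Type*} (s : Finset ι) (f : ι → EReal)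
    (hf : ∀ i ∈ s, f i ≠ ⊥) : ∑ i ∈ s, f i ≠ ⊥ := by
  induction s using Finset.cons_induction with
  | empty => simp
  | cons a s ha ih =>
    rw [Finset.sum_cons]
    exact myAddNeBot (hf a (Finset.mem_cons_self a s))
      (ih fun i hi => hf i (Finset.mem_cons_of_mem hi))

private lemma myMulSum {ι : Type*} (s : Finset ι) (r : ℝ) (hr : 0 < r) (f : ι → EReal)
    (hf : ∀ i ∈ s, f i ≠ ⊥) :
    (r : EReal) * ∑ i ∈ s, f i = ∑ i ∈ s, (r : EReal) * f i := by
  induction s using Finset.cons_induction with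
  | empty => simp
  | cons a s ha ih =>
    rw [Finset.sum_cons, Finset.sum_cons,
      myMulAdd r hr _ _ (hf a (Finset.mem_cons_self a s))
        (mySumNeBot s f fun i hi => hf i (Finset.mem_cons_of_mem hi)),
      ih fun i hi => hf i (Finset.mem_cons_of_mem hi)]

private lemma myMono (r : ℝ) (hr : 0 ≤ r) (c : EReal) :
    Monotone (fun x : EReal => (r : EReal) * x + c) := fun a b h =>
  add_le_add_left (mul_le_mul_of_nonneg_left h (EReal.coe_nonneg.mpr hr)) c

/-- The max-one-cut bundle model `Γ_j = max_{k ∈ B_j} L_k^j` admits the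
recursive update of step 2 of S-Max1C, and in particular satisfies the model
condition `Γ_j ≥ β Γ_{j-1} + (1-β) ℓ_j`.  Functions with values in
`ℝ ∪ {+∞}` are modeled as `EReal`-valued functions never equal to `⊥`. -/
theorem stmt4 {n : ℕ} (I : ℕ) (hI : 2 ≤ I)
    (β : ℝ) (hβ : β ∈ Set.Ioo (0 : ℝ) 1)
    (ℓ : ℕ → EuclideanSpace ℝ (Fin n) → EReal)
    (hℓbot : ∀ i x, ℓ i x ≠ ⊥)
    (B : Finset ℕ) (h1B : 1 ∈ B) (hBsub : ∀ k ∈ B, 1 ≤ k ∧ k ≤ I)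
    (L : ℕ → ℕ → EuclideanSpace ℝ (Fin n) → EReal)
    (hL : ∀ k j, 1 ≤ k → k ≤ j → j ≤ I → ∀ u,
      L k j u = ((β ^ (j - k) : ℝ) : EReal) * ℓ k u
        + ∑ i ∈ Finset.Ioc k j, (((1 - β) * β ^ (j - i) : ℝ) : EReal) * ℓ i u)
    (Γ : ℕ → EuclideanSpace ℝ (Fin n) → EReal)
    (hΓ : ∀ j, 1 ≤ j → j ≤ I → ∀ u,
      Γ j u = (B.filter (fun k => k ≤ j)).sup (fun k => L k j u)) :
    (∀ u, Γ 1 u = ℓ 1 u) ∧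
    (∀ j, 2 ≤ j → j ≤ I → ∀ u,
      (j ∈ B → Γ j u = ((1 - β : ℝ) : EReal) * ℓ j u
          + (β : EReal) * max (Γ (j - 1) u) (ℓ j u)) ∧
      (j ∉ B → Γ j u = ((1 - β : ℝ) : EReal) * ℓ j u
          + (β : EReal) * Γ (j - 1) u) ∧
      (β : EReal) * Γ (j - 1) u + ((1 - β : ℝ) : EReal) * ℓ j u ≤ Γ j u) := by
  obtain ⟨hβ0, hβ1⟩ := hβ
  have hβ1' : 0 < 1 - β := by linarith
  -- L k k u = ℓ k u
  have hLkk : ∀ k, 1 ≤ k → k ≤ I → ∀ u, L k k u = ℓ k u := by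
    intro k hk1 hkI u
    rw [hL k k hk1 le_rfl hkI u]
    simp
  -- recursion for L
  have hLrec : ∀ k j, 1 ≤ k → k + 1 ≤ j → j ≤ I → ∀ u,
      L k j u = (β : EReal) * L k (j - 1) u + ((1 - β : ℝ) : EReal) * ℓ j u := by
    intro k j hk1 hkj hjI u
    have hj1 : 1 ≤ j := le_trans (by omega) hkj
    have hkj1 : k ≤ j - 1 := by omega
    have hjeq : j = (j - 1) + 1 := by omega
    rw [hL k j hk1 (by omega) hjI u, hL k (j - 1) hk1 hkj1 (by omega) u,
      myMulAdd β hβ0 _ _ (myMulNeBot (pow_pos hβ0 _) (hℓbot k u))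
        (mySumNeBot _ _ fun i _ => myMulNeBot (by positivity) (hℓbot i u)),
      myMulSum _ β hβ0 _ fun i _ => myMulNeBot (by positivity) (hℓbot i u)]
    have h1 : ((β ^ (j - k) : ℝ) : EReal) * ℓ k u
        = (β : EReal) * (((β ^ (j - 1 - k) : ℝ) : EReal) * ℓ k u) := by
      have hjk : j - k = (j - 1 - k) + 1 := by omega
      rw [← mul_assoc, ← EReal.coe_mul, hjk, pow_succ']
    have h2 : ∀ i ∈ Finset.Ioc k (j - 1),
        (β : EReal) * ((((1 - β) * β ^ (j - 1 - i) : ℝ) : EReal) * ℓ i u)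
        = (((1 - β) * β ^ (j - i) : ℝ) : EReal) * ℓ i u := by
      intro i hi
      have hij : j - i = (j - 1 - i) + 1 := by
        have := (Finset.mem_Ioc.mp hi).2
        omega
      rw [← mul_assoc, ← EReal.coe_mul, hij, pow_succ']
      congr 2
      ring
    have hsum : ∑ i ∈ Finset.Ioc k j, (((1 - β) * β ^ (j - i) : ℝ) : EReal) * ℓ i u
        = ∑ i ∈ Finset.Ioc k (j - 1), (((1 - β) * β ^ (j - i) : ℝ) : EReal) * ℓ i u
          + (((1 - β) * β ^ (j - j) : ℝ) : EReal) * ℓ j u := by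
      conv_lhs => rw [hjeq]
      rw [Finset.sum_Ioc_succ_top hkj1, ← hjeq]
    have hsimp : (((1 - β) * β ^ (j - j) : ℝ) : EReal) * ℓ j u
        = ((1 - β : ℝ) : EReal) * ℓ j u := by
      congr 2
      simp
    rw [hsum, hsimp, Finset.sum_congr rfl h2, ← h1, add_assoc]
  -- the filtered sets
  have hfilt1 : B.filter (fun k => k ≤ 1) = {1} := by
    ext k
    simp only [Finset.mem_filter, Finset.mem_singleton]
    constructor
    · rintro ⟨hkB, hk1⟩
      have := (hBsub k hkB).1
      omega
    · rintro rfl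
      exact ⟨h1B, le_rfl⟩
  have hΓ1 : ∀ u, Γ 1 u = ℓ 1 u := by
    intro u
    rw [hΓ 1 le_rfl (by omega) u, hfilt1, Finset.sup_singleton, hLkk 1 le_rfl (by omega) u]
  refine ⟨hΓ1, ?_⟩
  intro j hj2 hjI u
  -- nonempty filtered set at j-1
  have hj11 : 1 ≤ j - 1 := by omega
  have hne : (B.filter (fun k => k ≤ j - 1)).Nonempty :=
    ⟨1, Finset.mem_filter.mpr ⟨h1B, hj11⟩⟩
  -- sup over B_{j-1} of L · j equals β Γ_{j-1} + (1-β) ℓ j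
  have hkey : (B.filter (fun k => k ≤ j - 1)).sup (fun k => L k j u)
      = (β : EReal) * Γ (j - 1) u + ((1 - β : ℝ) : EReal) * ℓ j u := by
    have hcong : (B.filter (fun k => k ≤ j - 1)).sup (fun k => L k j u)
        = (B.filter (fun k => k ≤ j - 1)).sup
            (fun k => (β : EReal) * L k (j - 1) u + ((1 - β : ℝ) : EReal) * ℓ j u) := by
      apply Finset.sup_congr rfl
      intro k hk
      obtain ⟨hkB, hkj1⟩ := Finset.mem_filter.mp hk
      exact hLrec k j (hBsub k hkB).1 (by omega) hjI u
    rw [hcong, hΓ (j - 1) hj11 (by omega) u]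
    exact (Finset.comp_sup_eq_sup_comp_of_nonempty
      (f := fun k => L k (j - 1) u)
      (myMono β hβ0.le (((1 - β : ℝ) : EReal) * ℓ j u)) hne).symm
  have hΓ1ne : Γ (j - 1) u ≠ ⊥ := by
    rw [hΓ (j - 1) hj11 (by omega) u]
    intro h
    have h1mem : 1 ∈ B.filter (fun k => k ≤ j - 1) := Finset.mem_filter.mpr ⟨h1B, hj11⟩
    have hle : L 1 (j - 1) u ≤ ⊥ := h ▸ Finset.le_sup (f := fun k => L k (j - 1) u) h1mem
    have : L 1 (j - 1) u = ⊥ := le_bot_iff.mp hle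
    rw [hL 1 (j - 1) le_rfl hj11 (by omega) u] at this
    exact myAddNeBot (myMulNeBot (pow_pos hβ0 _) (hℓbot 1 u))
      (mySumNeBot _ _ fun i _ => myMulNeBot (by positivity) (hℓbot i u)) this
  have hβℓ : (β : EReal) * ℓ j u + ((1 - β : ℝ) : EReal) * ℓ j u = ℓ j u := by
    rw [← EReal.right_distrib_of_nonneg (by exact_mod_cast hβ0.le)
        (by exact_mod_cast hβ1'.le)]
    have h1 : ((β : ℝ) : EReal) + ((1 - β : ℝ) : EReal) = (1 : EReal) := by
      rw [← EReal.coe_add]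
      norm_num
    rw [h1, one_mul]
  refine ⟨?_, ?_, ?_⟩
  · -- case j ∈ B
    intro hjB
    have hsplit : B.filter (fun k => k ≤ j) = insert j (B.filter (fun k => k ≤ j - 1)) := by
      ext k
      simp only [Finset.mem_filter, Finset.mem_insert]
      constructor
      · rintro ⟨hkB, hkj⟩
        rcases eq_or_lt_of_le hkj with h | h
        · exact Or.inl h
        · exact Or.inr ⟨hkB, by omega⟩
      · rintro (rfl | ⟨hkB, hkj⟩)
        · exact ⟨hjB, le_rfl⟩
        · exact ⟨hkB, by omega⟩
    rw [hΓ j (by omega) hjI u, hsplit, Finset.sup_insert, hkey,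
      hLkk j (by omega) hjI u]
    have hmax : (β : EReal) * max (Γ (j - 1) u) (ℓ j u)
        = max ((β : EReal) * Γ (j - 1) u) ((β : EReal) * ℓ j u) := by
      exact Monotone.map_max fun a b h => mul_le_mul_of_nonneg_left h (by exact_mod_cast hβ0.le)
    rw [hmax]
    rw [add_comm ((β : EReal) * Γ (j - 1) u) (((1 - β : ℝ) : EReal) * ℓ j u)]
    have hmax2 : ((1 - β : ℝ) : EReal) * ℓ j u
          + max ((β : EReal) * Γ (j - 1) u) ((β : EReal) * ℓ j u)
        = max (((1 - β : ℝ) : EReal) * ℓ j u + (β : EReal) * Γ (j - 1) u)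
            (((1 - β : ℝ) : EReal) * ℓ j u + (β : EReal) * ℓ j u) := by
      exact Monotone.map_max fun a b h => add_le_add_right h _
    rw [hmax2]
    have : ((1 - β : ℝ) : EReal) * ℓ j u + (β : EReal) * ℓ j u = ℓ j u := by
      rw [add_comm]; exact hβℓ
    rw [this, max_comm]
  · -- case j ∉ B
    intro hjB
    have hsplit : B.filter (fun k => k ≤ j) = B.filter (fun k => k ≤ j - 1) := by
      ext k
      simp only [Finset.mem_filter]
      constructor
      · rintro ⟨hkB, hkj⟩
        refine ⟨hkB, ?_⟩
        rcases eq_or_lt_of_le hkj with h | h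
        · exact absurd (h ▸ hkB) hjB
        · omega
      · rintro ⟨hkB, hkj⟩
        exact ⟨hkB, by omega⟩
    rw [hΓ j (by omega) hjI u, hsplit, hkey, add_comm]
  · -- the inequality
    rw [hΓ j (by omega) hjI u]
    calc (β : EReal) * Γ (j - 1) u + ((1 - β : ℝ) : EReal) * ℓ j u
        = (B.filter (fun k => k ≤ j - 1)).sup (fun k => L k j u) := hkey.symm
      _ ≤ (B.filter (fun k => k ≤ j)).sup (fun k => L k j u) := by
          apply Finset.sup_mono
          intro k hk
          obtain ⟨hkB, hkj⟩ := Finset.mem_filter.mp hk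
          exact Finset.mem_filter.mpr ⟨hkB, by omega⟩
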